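/- Let d₀ ∈ G_Δ \ {1} be the unique element such that 𝔡_{d₀} is principal with a totally positive generator, and let ε_F⁺ > 1 be the generator of the group of totally positive units of O_F. Then ε_F⁺ ≡ 1 (mod 𝔡·𝔡_{d₀}⁻¹); ε_F⁺ ≡ −1 (mod 𝔡_p) for every odd prime p | d₀; if 2 | d₀ and ord₂(Δ) = 2 then ε_F⁺ ≡ −1 (mod 𝔡₂); and if 2 | d₀ and ord₂(Δ) = 3 then ε_F⁺ ≡ −1 (mod 𝔡₂³). -/

import Mathlib

open NumberField
open scoped nonZeroDivisors

attribute [local instance] Classical.propDecidable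

noncomputable section

/-- `d` is a fundamental discriminant (with `1` allowed, corresponding to the
trivial discriminant): either `d ≡ 1 (mod 4)` and `d` is squarefree, or
`d = 4m` with `m` squarefree and `m ≡ 2, 3 (mod 4)`. -/
def IsFundamentalDiscriminant (d : ℤ) : Prop :=
  (d % 4 = 1 ∧ Squarefree d) ∨
  (d % 4 = 0 ∧ Squarefree (d / 4) ∧ (d / 4 % 4 = 2 ∨ d / 4 % 4 = 3))

/-- Setup: the real quadratic field `F = ℚ(√Δ) ⊂ ℝ` of fundamental discriminant
`Δ > 1`, given as an abstract number field `F` of degree `2`, together with a real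
embedding `ι : F → ℝ`, the nontrivial Galois conjugation `σ : F → F` (restricting
to `σO` on the ring of integers) and the totally positive square root `sΔ` of `Δ`
in `𝓞 F` (so that `𝔡 = (sΔ)` is the different ideal and `𝔡⁻¹ = (1/√Δ)𝓞 F`). -/
structure QS where
  F : Type
  [fld : Field F]
  [nf : NumberField F]
  Δ : ℤ
  hΔ : 1 < Δ
  hfund : IsFundamentalDiscriminant Δ
  hdeg : Module.finrank ℚ F = 2
  ι : F →+* ℝ
  σ : F ≃+* F
  hσ : ∀ x, σ (σ x) = x
  hσne : σ ≠ RingEquiv.refl F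
  sΔ : 𝓞 F
  hsΔ : (algebraMap (𝓞 F) F sΔ) * (algebraMap (𝓞 F) F sΔ) = (Δ : F)
  hsΔpos : 0 < ι (algebraMap (𝓞 F) F sΔ)
  hsΔσ : σ (algebraMap (𝓞 F) F sΔ) = - algebraMap (𝓞 F) F sΔ
  σO : 𝓞 F →+* 𝓞 F
  hσO : ∀ x : 𝓞 F, algebraMap (𝓞 F) F (σO x) = σ (algebraMap (𝓞 F) F x)

attribute [instance] QS.fld QS.nf

/-- The inclusion `𝓞 F → F`. -/
def QS.toF (S : QS) (x : 𝓞 S.F) : S.F := algebraMap (𝓞 S.F) S.F x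

/-- `√Δ` as an element of `F`. -/
def QS.sqrtΔ (S : QS) : S.F := S.toF S.sΔ

/-- `x ∈ F` is totally positive. -/
def QS.Pos (S : QS) (x : S.F) : Prop := 0 < S.ι x ∧ 0 < S.ι (S.σ x)

/-- `x ∈ F` is an algebraic integer, i.e. lies in `𝓞 F`. -/
def QS.isInt (S : QS) (x : S.F) : Prop := ∃ a : 𝓞 S.F, S.toF a = x

/-- `x ∈ 𝔡⁻¹ = (1/√Δ)𝓞 F`. -/
def QS.inDual (S : QS) (x : S.F) : Prop := S.isInt (S.sqrtΔ * x)

/-- The norm `Nm(x) = x x'`, computed in `ℝ` via the embedding `ι`. -/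
def QS.NmR (S : QS) (x : S.F) : ℝ := S.ι x * S.ι (S.σ x)

/-- The trace `Tr(x) = x + x'`, computed in `ℝ` via the embedding `ι`. -/
def QS.TrR (S : QS) (x : S.F) : ℝ := S.ι x + S.ι (S.σ x)

/-- The different ideal `𝔡 = (√Δ)` of `𝓞 F`. -/
def QS.dIdeal (S : QS) : Ideal (𝓞 S.F) := Ideal.span {S.sΔ}

/-- The sign of `x ∈ F` (under the fixed real embedding). -/
def QS.sgn (S : QS) (x : S.F) : ℤ := if 0 < S.ι x then 1 else -1

/-- `r(x) = |x/x'|`. -/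
def QS.rQ (S : QS) (x : S.F) : ℝ := |S.ι x / S.ι (S.σ x)|

/-- `P` is the unique prime ideal of `𝓞 F` above the rational prime `p`. -/
def QS.uniquePrimeAbove (S : QS) (p : ℕ) (P : Ideal (𝓞 S.F)) : Prop :=
  P.IsPrime ∧ P ≠ ⊥ ∧ P ≠ ⊤ ∧ (p : 𝓞 S.F) ∈ P ∧
    ∀ Q : Ideal (𝓞 S.F), Q.IsPrime → Q ≠ ⊥ → Q ≠ ⊤ → (p : 𝓞 S.F) ∈ Q → Q = P

/-- The set `Nm⁻(𝔟) = 𝔟/𝔟'` of `x ∈ F` with `x·𝔟' ⊆ 𝔟` (for invertible `𝔟`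
this is exactly the fractional ideal `𝔟 (𝔟')⁻¹`). -/
def QS.nmMinus (S : QS) (b : Ideal (𝓞 S.F)) : Set S.F :=
  {x | ∀ y ∈ b, ∃ c ∈ b, S.toF c = x * S.toF (S.σO y)}

/-- The set `Nm⁻(𝔟)𝔡⁻¹ = 𝔟 (𝔟')⁻¹ 𝔡⁻¹`, i.e. those `x ∈ F` with `x √Δ 𝔟' ⊆ 𝔟`. -/
def QS.nmMinusDual (S : QS) (b : Ideal (𝓞 S.F)) : Set S.F :=
  {x | ∀ y ∈ b, ∃ c ∈ b, S.toF c = x * S.sqrtΔ * S.toF (S.σO y)}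

/-- `x ≡ h` in `A_Δ = Nm⁻(𝔟)𝔡⁻¹ / Nm⁻(𝔟)` under the canonical identification
with `𝔡⁻¹/𝓞 F`: the difference decomposes as an element of `Nm⁻(𝔟)` plus an
algebraic integer. -/
def QS.congMod (S : QS) (b : Ideal (𝓞 S.F)) (x h : S.F) : Prop :=
  ∃ a ∈ S.nmMinus b, ∃ r : 𝓞 S.F, x - h = a + S.toF r

/-- The lattice point set `{λ ∈ Nm⁻(𝔟)𝔡⁻¹ : λ ≡ h in A_Δ, Nm(λ) = m}`. -/
def QS.latticeSet (S : QS) (b : Ideal (𝓞 S.F)) (m : ℝ) (h : S.F) : Set S.F :=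
  {x | x ∈ S.nmMinusDual b ∧ S.congMod b x h ∧ S.NmR x = m}

/-- Fundamental domain `1 ≤ |x/x'| < e²` for the action of `Γ_Δ = ⟨ε_Δ⟩`
(where `e = ε_Δ`), intersected with a set `T`. -/
def QS.fdSet (S : QS) (e : ℝ) (T : Set S.F) : Set S.F :=
  {x ∈ T | 1 ≤ S.rQ x ∧ S.rQ x < e ^ 2}

/-- `c_𝔞(m, h) = Σ_Λ sgn(Λ)`, summed over the (finitely many) `Γ_Δ`-orbits of
`{λ ∈ Nm⁻(𝔟)𝔡⁻¹ : λ ≡ h, Nm(λ) = m}`, each orbit represented by its element in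
the fundamental domain `1 ≤ |λ/λ'| < ε_Δ²`.  Here `e = ε_Δ`. -/
def QS.cIdeal (S : QS) (e : ℝ) (b : Ideal (𝓞 S.F)) (m : ℝ) (h : S.F) : ℤ :=
  ∑ᶠ x ∈ S.fdSet e (S.latticeSet b m h), S.sgn x

/-- `a(Λ)` for an orbit with representative `x` in the fundamental domain:
`sgn(x) log|x/x'|` if `|x/x'| ≠ 1`, and `−log ε_Δ` otherwise (`e = ε_Δ`). -/
def QS.aVal (S : QS) (e : ℝ) (x : S.F) : ℝ :=
  if S.rQ x ≠ 1 then (S.sgn x : ℝ) * Real.log (S.rQ x) else - Real.log e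

/-- `tc_𝔞(m, h) = Σ_Λ a(Λ)` over the `Γ_Δ`-orbits as in `QS.cIdeal`. -/
def QS.tcIdeal (S : QS) (e : ℝ) (b : Ideal (𝓞 S.F)) (m : ℝ) (h : S.F) : ℝ :=
  ∑ᶠ x ∈ S.fdSet e (S.latticeSet b m h), S.aVal e x

/-- Two integral ideals are narrowly equivalent (same class in `Cl⁺(F)`). -/
def QS.narrowEq (S : QS) (a b : Ideal (𝓞 S.F)) : Prop :=
  ∃ α β : 𝓞 S.F, S.Pos (S.toF α) ∧ S.Pos (S.toF β) ∧
    Ideal.span {α} * a = Ideal.span {β} * b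

/-- `SF` is a set of integral ideals coprime to `𝔡` representing the classes of
the narrow class group `Cl⁺(F)` exactly once. -/
def QS.IsRepSet (S : QS) (SF : Finset (Ideal (𝓞 S.F))) : Prop :=
  (∀ b ∈ SF, b ≠ ⊥ ∧ IsCoprime b S.dIdeal) ∧
  ∀ a : Ideal (𝓞 S.F), a ≠ ⊥ → ∃! b, b ∈ SF ∧ S.narrowEq a b

/-- `χ` is a genus character of `F`: a `{±1}`-valued, multiplicative function on
integral ideals, invariant under narrow equivalence, of the form `χ_{Δ₁,Δ₂}`
for a factorization `Δ = Δ₁Δ₂` into coprime fundamental discriminants, i.e.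
taking the value `(Δ₁/p)` (Legendre symbol) on degree-one primes `𝔭 ∤ Δ`. -/
def QS.IsGenusChar (S : QS) (χ : Ideal (𝓞 S.F) → ℤ) : Prop :=
  (∀ a b : Ideal (𝓞 S.F), a ≠ ⊥ → b ≠ ⊥ → χ (a * b) = χ a * χ b) ∧
  (∀ a : Ideal (𝓞 S.F), a ≠ ⊥ → χ a = 1 ∨ χ a = -1) ∧
  (∀ a b : Ideal (𝓞 S.F), a ≠ ⊥ → b ≠ ⊥ → S.narrowEq a b → χ a = χ b) ∧
  (∃ Δ₁ Δ₂ : ℤ, S.Δ = Δ₁ * Δ₂ ∧ IsCoprime Δ₁ Δ₂ ∧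
    IsFundamentalDiscriminant Δ₁ ∧ IsFundamentalDiscriminant Δ₂ ∧
    ∀ (p : ℕ) (hp : p.Prime), p ≠ 2 → ¬ ((p : ℤ) ∣ S.Δ) →
      ∀ P : Ideal (𝓞 S.F), Ideal.absNorm P = p → χ P = @legendreSym p ⟨hp⟩ Δ₁)

/-- `χ` is an odd genus character: `χ([𝔡]) = −1`. -/
def QS.IsOddGenusChar (S : QS) (χ : Ideal (𝓞 S.F) → ℤ) : Prop :=
  S.IsGenusChar χ ∧ χ S.dIdeal = -1

/-- `c_χ(m, h) = Σ_{[𝔟] ∈ Cl⁺(F)} χ([𝔟]) Σ_Λ sgn(Λ)`, the sum over narrow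
classes realized by summing over the representative set `SF`; here `λ` runs over
`Γ_Δ`-orbits of `{λ ∈ Nm⁻(𝔟)𝔡⁻¹ : λ ≡ h, Nm(λ) = −m}` (`e = ε_Δ`). -/
def QS.cChi (S : QS) (e : ℝ) (SF : Finset (Ideal (𝓞 S.F)))
    (χ : Ideal (𝓞 S.F) → ℤ) (m : ℝ) (h : S.F) : ℤ :=
  ∑ b ∈ SF, χ b * S.cIdeal e b (-m) h

/-- `tc_χ(m, h) = (1/2) Σ_{𝔟 ∈ S_F} χ([𝔟]) tc_{Nm⁻(𝔟)}(m, h)`. -/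
def QS.tcChi (S : QS) (e : ℝ) (SF : Finset (Ideal (𝓞 S.F)))
    (χ : Ideal (𝓞 S.F) → ℤ) (m : ℝ) (h : S.F) : ℝ :=
  (1 / 2) * ∑ b ∈ SF, (χ b : ℝ) * S.tcIdeal e b m h

/-- `s_h = #{s ∈ {1, ε_F⁺} : s h = h} − #{s ∈ {−1, −ε_F⁺} : s h = h}` in
`A_Δ = 𝔡⁻¹/𝓞 F`. -/
def QS.shVal (S : QS) (εp : (𝓞 S.F)ˣ) (h : S.F) : ℤ :=
  ((if S.isInt ((1 : S.F) * h - h) then 1 else 0)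
      + (if S.isInt (S.toF ↑εp * h - h) then 1 else 0))
    - ((if S.isInt ((-1 : S.F) * h - h) then 1 else 0)
      + (if S.isInt ((-(S.toF ↑εp)) * h - h) then 1 else 0))

/-- `χ(sqrt(𝔞, h))`: the sum of `χ([𝔟])` over those classes `[𝔟] ∈ Cl⁺(F)`
(represented by `SF`) for which `𝔞 = Nm⁻(𝔟)(μ)` for some `μ > 0` with
`μ/√Δ ∈ 𝔡⁻¹` representing `h ∈ A_Δ`. -/
def QS.chiSqrt (S : QS) (SF : Finset (Ideal (𝓞 S.F))) (χ : Ideal (𝓞 S.F) → ℤ)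
    (a : Ideal (𝓞 S.F)) (h : S.F) : ℤ :=
  ∑ b ∈ SF, χ b *
    (if ∃ μ : S.F, 0 < S.ι μ ∧ S.isInt μ ∧ S.isInt (μ / S.sqrtΔ - h) ∧
        {z : S.F | ∃ c ∈ a, S.toF c = z} = {z : S.F | ∃ y ∈ S.nmMinus b, z = μ * y}
      then 1 else 0)

/-- `σ_χ(𝔞) = Σ_{𝔟 ⊇ 𝔞} χ([𝔟])`, the divisor sum of `χ`. -/
def QS.sigmaChi (S : QS) (χ : Ideal (𝓞 S.F) → ℤ) (a : Ideal (𝓞 S.F)) : ℤ :=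
  ∑ᶠ b ∈ {b : Ideal (𝓞 S.F) | a ≤ b}, χ b

/-- `ord_𝔩(J)`, the exponent of the prime `𝔩` in the nonzero integral ideal `J`. -/
def QS.ordI (S : QS) (l J : Ideal (𝓞 S.F)) : ℕ := sSup {k : ℕ | J ≤ l ^ k}

/-- The group `G_Δ` of absolute values of fundamental discriminants `e | Δ` with
`gcd(e, Δ/e) = 1`. -/
def GD (Δ : ℤ) : Set ℤ :=
  {d | 0 < d ∧ ∃ e : ℤ, d = |e| ∧ IsFundamentalDiscriminant e ∧ e ∣ Δ ∧ IsCoprime e (Δ / e)}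

/-- `𝔡_d = Π_{p | d prime} 𝔡_p`, where `dP p` is the prime of `𝓞 F` above `p`. -/
def QS.dProd (S : QS) (dP : ℕ → Ideal (𝓞 S.F)) (d : ℤ) : Ideal (𝓞 S.F) :=
  ∏ p ∈ d.natAbs.primeFactors, dP p

/-- An integral ideal is principal with a totally positive generator. -/
def QS.PrincPos (S : QS) (a : Ideal (𝓞 S.F)) : Prop :=
  ∃ γ : 𝓞 S.F, S.Pos (S.toF γ) ∧ a = Ideal.span {γ}

namespace QS
variable (S : QS)

lemma toF_inj : Function.Injective S.toF := RingOfIntegers.coe_injective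

lemma ΔF_ne : (S.Δ : S.F) ≠ 0 := by
  have : (S.Δ : S.F) = ((S.Δ : ℚ) : S.F) := by push_cast; ring
  rw [this]
  rw [Rat.cast_ne_zero]
  have := S.hΔ
  exact_mod_cast (by omega : S.Δ ≠ 0)

lemma sqrtΔ_ne : S.sqrtΔ ≠ 0 := by
  intro h
  have := S.hsΔ
  rw [show algebraMap (𝓞 S.F) S.F S.sΔ = S.sqrtΔ from rfl, h, mul_zero] at this
  exact S.ΔF_ne this.symm

lemma σ_sqrtΔ : S.σ S.sqrtΔ = -S.sqrtΔ := S.hsΔσ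

lemma fixed_rat (x : S.F) (hx : S.σ x = x) : ∃ q : ℚ, x = (q : S.F) := by
  have hdep : ¬ LinearIndependent ℚ ![(1 : S.F), S.sqrtΔ, x] := by
    intro h
    have := h.fintype_card_le_finrank
    rw [S.hdeg] at this
    simp at this
  rw [Fintype.not_linearIndependent_iff] at hdep
  obtain ⟨g, hsum, i, hi⟩ := hdep
  rw [Fin.sum_univ_three] at hsum
  simp only [Matrix.cons_val_zero, Matrix.cons_val_one, Matrix.head_cons,
    Matrix.cons_val_two, Matrix.tail_cons] at hsum
  have hsum' : (g 0 : S.F) + (g 1 : S.F) * S.sqrtΔ + (g 2 : S.F) * x = 0 := by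
    rw [← hsum]; simp [Rat.smul_def]
  have hσsum : (g 0 : S.F) + (g 1 : S.F) * (-S.sqrtΔ) + (g 2 : S.F) * x = 0 := by
    have := congrArg S.σ hsum'
    rw [map_zero, map_add, map_add, map_mul, map_mul, map_ratCast, map_ratCast,
      map_ratCast, S.σ_sqrtΔ, hx] at this
    exact this
  have hg1 : (g 1 : S.F) * S.sqrtΔ = 0 := by linear_combination (hsum' - hσsum) / 2
  have hg1' : g 1 = 0 := by
    rcases mul_eq_zero.1 hg1 with h | h
    · exact_mod_cast h
    · exact absurd h S.sqrtΔ_ne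
  by_cases hg2 : g 2 = 0
  · exfalso
    have hg0 : g 0 = 0 := by
      rw [hg1', hg2] at hsum'
      simpa using hsum'
    fin_cases i <;> simp_all
  · refine ⟨-(g 0 / g 2), ?_⟩
    rw [hg1'] at hsum'
    have hg2' : (g 2 : S.F) ≠ 0 := by exact_mod_cast hg2
    push_cast
    field_simp
    linear_combination hsum'

lemma σO_toF (a : 𝓞 S.F) : S.toF (S.σO a) = S.σ (S.toF a) := S.hσO a

lemma σO_σO (a : 𝓞 S.F) : S.σO (S.σO a) = a :=
  S.toF_inj (by rw [S.σO_toF, S.σO_toF, S.hσ])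

lemma toF_intCast (n : ℤ) : S.toF ((n : 𝓞 S.F)) = (n : S.F) := map_intCast _ n

lemma toF_add (x y : 𝓞 S.F) : S.toF (x + y) = S.toF x + S.toF y := map_add _ x y

lemma toF_mul (x y : 𝓞 S.F) : S.toF (x * y) = S.toF x * S.toF y := map_mul _ x y

lemma toF_sub (x y : 𝓞 S.F) : S.toF (x - y) = S.toF x - S.toF y := map_sub _ x y

lemma anti_sqrt (y : S.F) (hy : S.σ y = -y) : ∃ q : ℚ, y = (q : S.F) * S.sqrtΔ := by
  obtain ⟨q, hq⟩ := S.fixed_rat (y * S.sqrtΔ) (by rw [map_mul, hy, S.σ_sqrtΔ]; ring)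
  refine ⟨q / (S.Δ : ℚ), ?_⟩
  have h2 : S.sqrtΔ * S.sqrtΔ = (S.Δ : S.F) := S.hsΔ
  have h3 : y * (S.Δ : S.F) = (q : S.F) * S.sqrtΔ := by
    rw [← h2, ← mul_assoc, hq]
  have hΔne := S.ΔF_ne
  push_cast
  field_simp
  linear_combination h3

lemma fixed_int (a : 𝓞 S.F) (ha : S.σO a = a) : ∃ n : ℤ, a = (n : 𝓞 S.F) := by
  obtain ⟨q, hq⟩ := S.fixed_rat (S.toF a) (by rw [← S.σO_toF, ha])
  have hint : IsIntegral ℤ q := by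
    have h1 : IsIntegral ℤ ((q : S.F)) := hq ▸ RingOfIntegers.isIntegral_coe a
    rw [← eq_ratCast (algebraMap ℚ S.F) q] at h1
    exact (isIntegral_algebraMap_iff (algebraMap ℚ S.F).injective).mp h1
  obtain ⟨n, hn⟩ := IsIntegrallyClosed.isIntegral_iff.mp hint
  have hn' : (n : ℚ) = q := by exact_mod_cast hn
  refine ⟨n, S.toF_inj ?_⟩
  rw [hq, S.toF_intCast, ← hn']
  push_cast
  ring

lemma trace_int (a : 𝓞 S.F) : ∃ t : ℤ, a + S.σO a = (t : 𝓞 S.F) :=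
  S.fixed_int _ (by rw [map_add, S.σO_σO, add_comm])

lemma norm_int (a : 𝓞 S.F) : ∃ n : ℤ, a * S.σO a = (n : 𝓞 S.F) :=
  S.fixed_int _ (by rw [map_mul, S.σO_σO, mul_comm])

lemma diff_sΔ (a : 𝓞 S.F) : ∃ r : ℤ, a - S.σO a = (r : 𝓞 S.F) * S.sΔ := by
  obtain ⟨q, hq⟩ := S.anti_sqrt (S.toF a - S.σ (S.toF a))
    (by rw [map_sub, S.hσ]; ring)
  obtain ⟨t, ht⟩ := S.trace_int a
  obtain ⟨n, hn⟩ := S.norm_int a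
  have htF : S.toF a + S.σ (S.toF a) = (t : S.F) := by
    have := congrArg S.toF ht
    rwa [S.toF_add, S.σO_toF, S.toF_intCast] at this
  have hnF : S.toF a * S.σ (S.toF a) = (n : S.F) := by
    have := congrArg S.toF hn
    rwa [S.toF_mul, S.σO_toF, S.toF_intCast] at this
  have hqF : S.toF a - S.σ (S.toF a) = (q : S.F) * S.sqrtΔ := hq
  have h2 : S.sqrtΔ * S.sqrtΔ = (S.Δ : S.F) := S.hsΔ
  have hidF : ((q ^ 2 * (S.Δ : ℚ) : ℚ) : S.F) = (((t ^ 2 - 4 * n : ℤ) : ℚ) : S.F) := by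
    push_cast
    linear_combination (-(S.toF a - S.σ (S.toF a) + (q : S.F) * S.sqrtΔ)) * hqF
      - (q : S.F) ^ 2 * h2
      + (S.toF a + S.σ (S.toF a) + (t : S.F)) * htF - 4 * hnF
  have hidQ : q ^ 2 * (S.Δ : ℚ) = ((t ^ 2 - 4 * n : ℤ) : ℚ) :=
    Rat.cast_injective hidF
  set z : ℤ := t ^ 2 - 4 * n with hz
  have hZnum : q.num ^ 2 * S.Δ = z * (q.den : ℤ) ^ 2 := by
    have hden : ((q.den : ℚ)) ≠ 0 := by exact_mod_cast q.den_nz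
    have hnum : (q.num : ℚ) = q * (q.den : ℚ) := by
      field_simp [Rat.num_div_den]
      exact (Rat.mul_den_eq_num q).symm
    have : ((q.num ^ 2 * S.Δ : ℤ) : ℚ) = ((z * (q.den : ℤ) ^ 2 : ℤ) : ℚ) := by
      push_cast
      rw [hnum]
      linear_combination ((q.den : ℚ)) ^ 2 * hidQ
    exact_mod_cast this
  have hdvd : (q.den) ^ 2 ∣ S.Δ.natAbs := by
    have h1 : ((q.den : ℤ)) ^ 2 ∣ q.num ^ 2 * S.Δ := ⟨z, by linarith [hZnum]⟩
    have h2' : q.den ^ 2 ∣ q.num.natAbs ^ 2 * S.Δ.natAbs := by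
      have := Int.natAbs_dvd_natAbs.mpr h1
      simpa [Int.natAbs_mul, Int.natAbs_pow] using this
    exact (Nat.Coprime.pow 2 2 q.reduced).symm.dvd_of_dvd_mul_left h2'
  have hden1 : q.den = 1 := by
    rcases S.hfund with ⟨_, hsf⟩ | ⟨hmod, hsf, hm4⟩
    · have hsf' : Squarefree S.Δ.natAbs := Int.squarefree_natAbs.mpr hsf
      exact Nat.isUnit_iff.mp (hsf' q.den (by rwa [← pow_two]))
    · set m : ℤ := S.Δ / 4 with hm
      have h4 : S.Δ = 4 * m := by omega
      have hmpos : 0 < m := by have := S.hΔ; omega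
      have hΔabs : S.Δ.natAbs = 4 * m.natAbs := by have := S.hΔ; omega
      have hsf' : Squarefree m.natAbs := Int.squarefree_natAbs.mpr hsf
      rw [hΔabs] at hdvd
      rcases Nat.even_or_odd q.den with he | ho
      · obtain ⟨e, hee⟩ := he
        have he' : q.den = 2 * e := by omega
        have h4e : 4 * e ^ 2 ∣ 4 * m.natAbs := by
          have h42 : (2 * e) ^ 2 = 4 * e ^ 2 := by ring
          rw [he', h42] at hdvd
          exact hdvd
        have heDvd : e ^ 2 ∣ m.natAbs :=
          (mul_dvd_mul_iff_left (by norm_num : (4 : ℕ) ≠ 0)).mp h4e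
        have he1 : e = 1 := Nat.isUnit_iff.mp (hsf' e (by rwa [← pow_two]))
        have hden2 : q.den = 2 := by omega
        exfalso
        have hcop := q.reduced
        rw [hden2] at hcop
        have h2nd : ¬ (2 ∣ q.num.natAbs) := by
          intro h2d
          have hg := Nat.dvd_gcd h2d (dvd_refl 2)
          rw [Nat.Coprime] at hcop
          rw [hcop] at hg
          norm_num at hg
        have hnumodd : q.num % 2 = 1 := by omega
        have hkey : q.num ^ 2 * m = z := by
          rw [h4, hden2] at hZnum
          push_cast at hZnum
          linarith
        have ht2 : t ^ 2 = q.num ^ 2 * m + 4 * n := by omega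
        obtain ⟨j, hj⟩ : ∃ j, q.num = 2 * j + 1 := ⟨(q.num - 1) / 2, by omega⟩
        rw [hj] at ht2
        rcases Int.even_or_odd t with ⟨u, hu⟩ | ⟨u, hu⟩
        · rw [hu] at ht2
          have e1 : m = 4 * (u * u - (j * j + j) * m - n) := by linear_combination -ht2
          generalize (u * u - (j * j + j) * m - n) = K at e1
          omega
        · rw [hu] at ht2
          have e1 : m = 4 * (u * u + u - (j * j + j) * m - n) + 1 := by
            linear_combination -ht2
          generalize (u * u + u - (j * j + j) * m - n) = K at e1
          omega
      · have hcop : Nat.Coprime (q.den ^ 2) 4 := by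
          have h1 : Nat.Coprime q.den 2 := by
            exact Nat.coprime_two_right.mpr ho
          exact h1.pow 2 2
        have hd : q.den ^ 2 ∣ m.natAbs := hcop.dvd_of_dvd_mul_left hdvd
        exact Nat.isUnit_iff.mp (hsf' q.den (by rwa [← pow_two]))
  have hqint : (q.num : ℚ) = q := (Rat.den_eq_one_iff q).mp hden1
  refine ⟨q.num, S.toF_inj ?_⟩
  rw [S.toF_sub, S.σO_toF, hqF, S.toF_mul, S.toF_intCast]
  have hcast : ((q.num : ℤ) : S.F) = (q : S.F) := by
    exact_mod_cast congrArg (fun r : ℚ => (r : S.F)) hqint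
  rw [hcast]
  rfl

lemma sq_sΔ : S.sΔ * S.sΔ = ((S.Δ : ℤ) : 𝓞 S.F) :=
  S.toF_inj (by rw [S.toF_mul, S.toF_intCast]; exact S.hsΔ)

lemma intCast_inj_O : Function.Injective (fun n : ℤ => (n : 𝓞 S.F)) := by
  intro a b h
  exact Int.cast_injective h

lemma one_in_P_of_coprime (P : Ideal (𝓞 S.F)) (hP : P ≠ ⊤) (a b : ℤ)
    (ha : ((a : ℤ) : 𝓞 S.F) ∈ P) (hcop : IsCoprime a b) : ((b : ℤ) : 𝓞 S.F) ∈ P → False := by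
  intro hb
  obtain ⟨x, y, hxy⟩ := hcop
  apply hP
  rw [Ideal.eq_top_iff_one]
  have : (1 : 𝓞 S.F) = (x : 𝓞 S.F) * (a : 𝓞 S.F) + (y : 𝓞 S.F) * (b : 𝓞 S.F) := by
    have := congrArg (fun n : ℤ => (n : 𝓞 S.F)) hxy
    push_cast at this
    rw [← this]
  rw [this]
  exact Ideal.add_mem _ (Ideal.mul_mem_left _ _ ha) (Ideal.mul_mem_left _ _ hb)

lemma prime_int_mem (p : ℕ) (hp : p.Prime) (P : Ideal (𝓞 S.F)) (hPtop : P ≠ ⊤)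
    (hpP : ((p : ℕ) : 𝓞 S.F) ∈ P) (n : ℤ) (hn : ((n : ℤ) : 𝓞 S.F) ∈ P) : (p : ℤ) ∣ n := by
  by_contra h
  have hcop : IsCoprime ((p : ℕ) : ℤ) n :=
    ((Nat.prime_iff_prime_int.mp hp).irreducible.coprime_iff_not_dvd).mpr h
  exact S.one_in_P_of_coprime P hPtop _ _ (by exact_mod_cast hpP) hcop hn

lemma map_up (p : ℕ) (P : Ideal (𝓞 S.F)) (hu : S.uniquePrimeAbove p P) :
    Ideal.map S.σO P = P := by
  obtain ⟨hPr, hPb, hPt, hpP, huniq⟩ := hu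
  have hinj : Function.Injective S.σO := fun a b h => by
    have := congrArg S.σO h
    rwa [S.σO_σO, S.σO_σO] at this
  have hmm : Ideal.map S.σO (Ideal.map S.σO P) = P := by
    rw [Ideal.map_map]
    have : S.σO.comp S.σO = RingHom.id _ := RingHom.ext S.σO_σO
    rw [this, Ideal.map_id]
  have hPrime : (Ideal.map S.σO P).IsPrime := by
    let σE : (𝓞 S.F) ≃+* (𝓞 S.F) :=
      { toFun := S.σO, invFun := S.σO, left_inv := S.σO_σO, right_inv := S.σO_σO,
        map_add' := map_add S.σO, map_mul' := map_mul S.σO }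
    have : Ideal.map S.σO P = Ideal.map σE P := rfl
    rw [this]
    exact Ideal.map_isPrime_of_equiv σE
  apply huniq
  · exact hPrime
  · intro hbot
    have hb2 := congrArg (Ideal.map S.σO) hbot
    rw [hmm, Ideal.map_bot] at hb2
    exact hPb hb2
  · intro htop
    rw [← hmm, htop, Ideal.map_top] at hPt
    exact hPt rfl
  · have : S.σO ((p : ℕ) : 𝓞 S.F) = ((p : ℕ) : 𝓞 S.F) := map_natCast _ _
    rw [← this]
    exact Ideal.mem_map_of_mem _ hpP

lemma up_distinct (p q : ℕ) (hp : p.Prime) (hq : q.Prime) (hne : p ≠ q)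
    (P Q : Ideal (𝓞 S.F)) (hup : S.uniquePrimeAbove p P) (huq : S.uniquePrimeAbove q Q) :
    P ≠ Q := by
  intro h
  have hpd : ¬ ((p : ℤ) ∣ (q : ℤ)) := by
    rw [Int.natCast_dvd_natCast]
    exact fun hd => hne ((Nat.prime_dvd_prime_iff_eq hp hq).mp hd)
  have hcop : IsCoprime ((p : ℕ) : ℤ) ((q : ℕ) : ℤ) :=
    ((Nat.prime_iff_prime_int.mp hp).irreducible.coprime_iff_not_dvd).mpr hpd
  refine S.one_in_P_of_coprime P hup.2.2.1 _ _ (by exact_mod_cast hup.2.2.2.1) hcop ?_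
  rw [h]
  exact_mod_cast huq.2.2.2.1

lemma NmEps (εp : (𝓞 S.F)ˣ) (hεppos : S.Pos (S.toF ↑εp)) :
    (↑εp : 𝓞 S.F) * S.σO ↑εp = 1 := by
  obtain ⟨n, hn⟩ := S.norm_int (↑εp : 𝓞 S.F)
  obtain ⟨m, hm⟩ := S.norm_int (↑εp⁻¹ : 𝓞 S.F)
  have h1 : (↑εp : 𝓞 S.F) * ↑εp⁻¹ = 1 := εp.mul_inv
  have h2 : S.σO ↑εp * S.σO ↑εp⁻¹ = 1 := by rw [← map_mul, h1, map_one]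
  have hnm : ((n * m : ℤ) : 𝓞 S.F) = ((1 : ℤ) : 𝓞 S.F) := by
    push_cast
    rw [← hn, ← hm]
    calc (↑εp : 𝓞 S.F) * S.σO ↑εp * ((↑εp⁻¹ : 𝓞 S.F) * S.σO ↑εp⁻¹)
        = ((↑εp : 𝓞 S.F) * ↑εp⁻¹) * (S.σO ↑εp * S.σO ↑εp⁻¹) := by ring
      _ = 1 := by rw [h1, h2, one_mul]
  have hnm' : n * m = 1 := S.intCast_inj_O hnm
  have hn1 : n = 1 ∨ n = -1 := Int.isUnit_iff.mp (IsUnit.of_mul_eq_one m hnm')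
  rcases hn1 with h1' | h1'
  · rw [hn, h1']; norm_num
  · exfalso
    have hpos : 0 < S.ι (S.toF ↑εp) * S.ι (S.σ (S.toF ↑εp)) :=
      mul_pos hεppos.1 hεppos.2
    have heq : S.ι (S.toF ↑εp) * S.ι (S.σ (S.toF ↑εp)) = ((n : ℤ) : ℝ) := by
      rw [← S.σO_toF, ← map_mul, ← S.toF_mul, hn, S.toF_intCast]
      simp
    rw [heq, h1'] at hpos
    norm_num at hpos

lemma σO_unit_zpow (εp : (𝓞 S.F)ˣ) (hεppos : S.Pos (S.toF ↑εp)) (k : ℤ) :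
    S.σO ↑(εp ^ k) = ↑(εp ^ (-k)) := by
  have hinv : S.σO ↑εp = ↑εp⁻¹ := by
    have h1 := S.NmEps εp hεppos
    have h2 : (↑εp : 𝓞 S.F) * ↑εp⁻¹ = 1 := εp.mul_inv
    have hne : (↑εp : 𝓞 S.F) ≠ 0 := εp.ne_zero
    exact mul_left_cancel₀ hne (h1.trans h2.symm)
  have humap : (Units.map S.σO.toMonoidHom) εp = εp⁻¹ := Units.ext (by simpa using hinv)
  have h3 : (Units.map S.σO.toMonoidHom) (εp ^ k) = εp ^ (-k) := by
    rw [map_zpow, humap, inv_zpow, ← zpow_neg]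
  have h4 := congrArg Units.val h3
  simp only [Units.coe_map, MonoidHom.coe_coe] at h4
  exact h4

lemma pos_zpow_of_pos (g : 𝓞 S.F →+* ℝ) (w : (𝓞 S.F)ˣ) (hw : 0 < g ↑w) (k : ℤ) :
    0 < g ↑(w ^ k) := by
  have h3 := congrArg Units.val (map_zpow (Units.map g.toMonoidHom) w k)
  simp only [Units.coe_map, Units.val_zpow_eq_zpow_val, MonoidHom.coe_coe] at h3
  exact lt_of_lt_of_eq (zpow_pos hw k) h3.symm

lemma pos_unit_zpow (εp : (𝓞 S.F)ˣ) (hεppos : S.Pos (S.toF ↑εp)) (k : ℤ) :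
    S.Pos (S.toF ↑(εp ^ k)) := by
  constructor
  · have := S.pos_zpow_of_pos (S.ι.comp (algebraMap (𝓞 S.F) S.F)) εp hεppos.1 k
    simpa [QS.toF] using this
  · have h0 : 0 < (S.ι.comp ((S.σ : S.F →+* S.F).comp (algebraMap (𝓞 S.F) S.F))) ↑εp :=
      hεppos.2
    have := S.pos_zpow_of_pos (S.ι.comp ((S.σ : S.F →+* S.F).comp (algebraMap (𝓞 S.F) S.F)))
      εp h0 k
    simpa [QS.toF] using this

lemma odd_sq_not_dvd (p : ℕ) (hp : p.Prime) (hodd : p ≠ 2) : ¬ ((p : ℤ) * (p : ℤ) ∣ S.Δ) := by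
  intro hdvd
  rcases S.hfund with ⟨_, hsf⟩ | ⟨hmod, hsf, _⟩
  · have := Int.isUnit_iff.mp (hsf _ hdvd)
    have h2 := hp.two_le
    omega
  · set m : ℤ := S.Δ / 4 with hm
    have h4 : S.Δ = 4 * m := by omega
    have hnd4 : ¬ ((p : ℤ) ∣ 4) := by
      intro h
      have h' : p ∣ 4 := by exact_mod_cast h
      have h'' : p ∣ 2 ^ 2 := by norm_num at h' ⊢; exact h'
      exact hodd ((Nat.prime_dvd_prime_iff_eq hp Nat.prime_two).mp (hp.dvd_of_dvd_pow h''))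
    have hcop : IsCoprime ((p : ℕ) : ℤ) 4 :=
      ((Nat.prime_iff_prime_int.mp hp).irreducible.coprime_iff_not_dvd).mpr hnd4
    have hcop2 : IsCoprime ((p : ℤ) * (p : ℤ)) 4 := hcop.mul_left hcop
    have hdvd' : (p : ℤ) * (p : ℤ) ∣ 4 * m := by rwa [← h4]
    have : (p : ℤ) * (p : ℤ) ∣ m := by
      rcases hdvd' with ⟨e, he⟩
      exact (IsCoprime.dvd_of_dvd_mul_left hcop2 ⟨e, by linarith⟩)
    have := Int.isUnit_iff.mp (hsf _ this)
    have h2 := hp.two_le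
    omega

lemma ram (p : ℕ) (hp : p.Prime) (hpΔ : (p : ℤ) ∣ S.Δ) (P : Ideal (𝓞 S.F))
    (hu : S.uniquePrimeAbove p P) : ((p : ℕ) : 𝓞 S.F) ∈ P ^ 2 := by
  obtain ⟨hPr, hPb, hPt, hpP, _⟩ := hu
  obtain ⟨c, hc⟩ := hpΔ
  have hΔmem : ((S.Δ : ℤ) : 𝓞 S.F) ∈ P := by
    rw [hc]
    push_cast
    exact Ideal.mul_mem_right _ _ (by exact_mod_cast hpP)
  have hsΔP : S.sΔ ∈ P := by
    have hsq : S.sΔ * S.sΔ ∈ P := by rw [S.sq_sΔ]; exact hΔmem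
    rcases hPr.mem_or_mem hsq with h | h <;> exact h
  have hΔP2 : ((S.Δ : ℤ) : 𝓞 S.F) ∈ P ^ 2 := by
    rw [← S.sq_sΔ, pow_two]
    exact Ideal.mul_mem_mul hsΔP hsΔP
  by_cases hodd : p = 2
  · -- p = 2
    subst hodd
    have h2P : ((2 : ℕ) : 𝓞 S.F) ∈ P := hpP
    have hΔ4 : S.Δ % 4 = 0 := by
      rcases S.hfund with ⟨h1, _⟩ | ⟨h0, _, _⟩
      · omega
      · exact h0
    set m : ℤ := S.Δ / 4 with hm
    have h4 : S.Δ = 4 * m := by omega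
    have hm4 : m % 4 = 2 ∨ m % 4 = 3 := by
      rcases S.hfund with ⟨h1, _⟩ | ⟨_, _, h3⟩
      · omega
      · exact h3
    -- construct μ = sqrtΔ / 2
    have hΔcast : ((S.Δ : ℤ) : S.F) = 4 * ((m : ℤ) : S.F) := by
      rw [h4]; push_cast; ring
    have hsqQ : S.sqrtΔ * S.sqrtΔ = ((S.Δ : ℤ) : S.F) := S.hsΔ
    have hxsq : (S.sqrtΔ / 2) * (S.sqrtΔ / 2) = ((m : ℤ) : S.F) := by
      have h2ne : (2 : S.F) ≠ 0 := two_ne_zero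
      field_simp
      rw [pow_two, hsqQ, hΔcast]
      ring
    have hxint : IsIntegral ℤ (S.sqrtΔ / 2) := by
      refine ⟨Polynomial.X ^ 2 - Polynomial.C m, Polynomial.monic_X_pow_sub_C m (by norm_num), ?_⟩
      simp only [Polynomial.eval₂_sub, Polynomial.eval₂_pow, Polynomial.eval₂_X,
        Polynomial.eval₂_C]
      rw [pow_two, hxsq]
      simp [sub_self]
    set μ : 𝓞 S.F := ⟨S.sqrtΔ / 2, hxint⟩ with hμdef
    have hμ2 : μ * μ = ((m : ℤ) : 𝓞 S.F) := by
      apply S.toF_inj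
      rw [S.toF_mul, S.toF_intCast]
      exact hxsq
    rcases hm4 with hcase | hcase
    · -- m = 2w, w odd
      set w : ℤ := m / 2 with hw
      have hw2 : m = 2 * w := by omega
      have hwodd : ¬ ((2 : ℤ) ∣ w) := by omega
      have hμP : μ ∈ P := by
        have : μ * μ ∈ P := by
          rw [hμ2, hw2]
          push_cast
          exact Ideal.mul_mem_right _ _ (by exact_mod_cast h2P)
        rcases hPr.mem_or_mem this with h | h <;> exact h
      have hcop : IsCoprime (2 : ℤ) w :=
        ((Int.prime_iff_natAbs_prime.mpr (by norm_num)).irreducible.coprime_iff_not_dvd).mpr hwodd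
      obtain ⟨a, b, hab⟩ := hcop
      have hid : (2 : ℤ) = a * 4 + b * m := by rw [hw2]; linear_combination (-2 : ℤ) * hab
      have hidO : ((2 : ℕ) : 𝓞 S.F) = ((a : ℤ) : 𝓞 S.F) * 4 + ((b : ℤ) : 𝓞 S.F) * (μ * μ) := by
        rw [hμ2]
        have := congrArg (fun z : ℤ => (z : 𝓞 S.F)) hid
        push_cast at this ⊢
        exact this
      rw [hidO]
      refine Ideal.add_mem _ ?_ ?_
      · have h4mem : (4 : 𝓞 S.F) ∈ P ^ 2 := by
          have : (4 : 𝓞 S.F) = ((2 : ℕ) : 𝓞 S.F) * ((2 : ℕ) : 𝓞 S.F) := by push_cast; ring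
          rw [this, pow_two]
          exact Ideal.mul_mem_mul h2P h2P
        exact Ideal.mul_mem_left _ _ h4mem
      · have : μ * μ ∈ P ^ 2 := by rw [pow_two]; exact Ideal.mul_mem_mul hμP hμP
        exact Ideal.mul_mem_left _ _ this
    · -- m odd, m % 4 = 3
      set k : ℤ := (m + 1) / 2 with hk
      have hk2 : m = 2 * k - 1 := by omega
      set w : ℤ := (1 - m) / 2 with hw
      have hw2 : 1 - m = 2 * w := by omega
      have hwodd : ¬ ((2 : ℤ) ∣ w) := by omega
      have hν2 : (1 + μ) * (1 + μ) = 2 * (((k : ℤ) : 𝓞 S.F) + μ) := by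
        have hmk : ((m : ℤ) : 𝓞 S.F) = 2 * ((k : ℤ) : 𝓞 S.F) - 1 := by
          exact_mod_cast congrArg (fun z : ℤ => (z : 𝓞 S.F)) hk2
        linear_combination hμ2 + hmk
      have hν'2 : (1 - μ) * (1 - μ) = 2 * (((k : ℤ) : 𝓞 S.F) - μ) := by
        have hmk : ((m : ℤ) : 𝓞 S.F) = 2 * ((k : ℤ) : 𝓞 S.F) - 1 := by
          exact_mod_cast congrArg (fun z : ℤ => (z : 𝓞 S.F)) hk2
        linear_combination hμ2 + hmk
      have h2O : ((2 : ℕ) : 𝓞 S.F) = (2 : 𝓞 S.F) := by push_cast; ring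
      have hνP : (1 + μ) ∈ P := by
        have : (1 + μ) * (1 + μ) ∈ P := by
          rw [hν2]
          exact Ideal.mul_mem_right _ _ (by rw [← h2O]; exact h2P)
        rcases hPr.mem_or_mem this with h | h <;> exact h
      have hν'P : (1 - μ) ∈ P := by
        have : (1 - μ) * (1 - μ) ∈ P := by
          rw [hν'2]
          exact Ideal.mul_mem_right _ _ (by rw [← h2O]; exact h2P)
        rcases hPr.mem_or_mem this with h | h <;> exact h
      have hcop : IsCoprime (2 : ℤ) w :=
        ((Int.prime_iff_natAbs_prime.mpr (by norm_num)).irreducible.coprime_iff_not_dvd).mpr hwodd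
      obtain ⟨a, b, hab⟩ := hcop
      have hid : (2 : ℤ) = a * 4 + b * (1 - m) := by rw [hw2]; linear_combination (-2 : ℤ) * hab
      have hνν' : (1 + μ) * (1 - μ) = ((1 - m : ℤ) : 𝓞 S.F) := by
        push_cast
        linear_combination -hμ2
      have hidO : ((2 : ℕ) : 𝓞 S.F) = ((a : ℤ) : 𝓞 S.F) * 4
          + ((b : ℤ) : 𝓞 S.F) * ((1 + μ) * (1 - μ)) := by
        rw [hνν']
        have := congrArg (fun z : ℤ => (z : 𝓞 S.F)) hid
        push_cast at this ⊢
        exact this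
      rw [hidO]
      refine Ideal.add_mem _ ?_ ?_
      · have h4mem : (4 : 𝓞 S.F) ∈ P ^ 2 := by
          have : (4 : 𝓞 S.F) = ((2 : ℕ) : 𝓞 S.F) * ((2 : ℕ) : 𝓞 S.F) := by push_cast; ring
          rw [this, pow_two]
          exact Ideal.mul_mem_mul h2P h2P
        exact Ideal.mul_mem_left _ _ h4mem
      · have : (1 + μ) * (1 - μ) ∈ P ^ 2 := by
          rw [pow_two]
          exact Ideal.mul_mem_mul hνP hν'P
        exact Ideal.mul_mem_left _ _ this
  · -- p odd
    have hnd : ¬ ((p : ℤ) ∣ c) := by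
      intro h
      obtain ⟨d, hd⟩ := h
      exact S.odd_sq_not_dvd p hp hodd ⟨d, by rw [hc, hd]; ring⟩
    have hcop : IsCoprime ((p : ℕ) : ℤ) c :=
      ((Nat.prime_iff_prime_int.mp hp).irreducible.coprime_iff_not_dvd).mpr hnd
    obtain ⟨a, b, hab⟩ := hcop
    have hid : ((p : ℕ) : ℤ) = a * (p : ℤ) ^ 2 + b * S.Δ := by
      rw [hc]
      linear_combination (-(p : ℤ)) * hab
    have hidO : ((p : ℕ) : 𝓞 S.F) = ((a : ℤ) : 𝓞 S.F) * ((p : ℕ) : 𝓞 S.F) ^ 2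
        + ((b : ℤ) : 𝓞 S.F) * ((S.Δ : ℤ) : 𝓞 S.F) := by
      have := congrArg (fun z : ℤ => (z : 𝓞 S.F)) hid
      push_cast at this ⊢
      exact this
    rw [hidO]
    refine Ideal.add_mem _ ?_ ?_
    · exact Ideal.mul_mem_left _ _ (Ideal.pow_mem_pow hpP 2)
    · exact Ideal.mul_mem_left _ _ hΔP2

lemma span_unit_mul (v : (𝓞 S.F)ˣ) (x : 𝓞 S.F) :
    Ideal.span {(↑v * x : 𝓞 S.F)} = Ideal.span {x} := by
  apply Ideal.span_singleton_eq_span_singleton.mpr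
  refine ⟨v⁻¹, ?_⟩
  rw [mul_comm (↑v : 𝓞 S.F) x, mul_assoc, ← Units.val_mul]
  simp

end QS

/-- Let `d₀ ∈ G_Δ \ {1}` be the unique element with `𝔡_{d₀}`
principal with totally positive generator, and `ε_F⁺ > 1` the generator of the
totally positive units.  Then `ε_F⁺ ≡ 1 (mod 𝔡 𝔡_{d₀}⁻¹)` (i.e.
`(ε_F⁺ − 1)𝔡_{d₀} ⊆ 𝔡`); `ε_F⁺ ≡ −1 (mod 𝔡_p)` for every odd prime `p | d₀`;
if `2 | d₀` and `ord₂(Δ) = 2` then `ε_F⁺ ≡ −1 (mod 𝔡₂)`; and if `2 | d₀` and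
`ord₂(Δ) = 3` then `ε_F⁺ ≡ −1 (mod 𝔡₂³)`. -/


theorem eps_congruences (S : QS) (dP : ℕ → Ideal (𝓞 S.F))
    (hdP : ∀ p : ℕ, p.Prime → (p : ℤ) ∣ S.Δ → S.uniquePrimeAbove p (dP p))
    (d₀ : ℤ) (hd₀ : d₀ ∈ GD S.Δ) (hd₀1 : d₀ ≠ 1)
    (hd₀princ : S.PrincPos (S.dProd dP d₀))
    (εp : (𝓞 S.F)ˣ) (hεppos : S.Pos (S.toF ↑εp)) (hεpgt : 1 < S.ι (S.toF ↑εp))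
    (hεpgen : ∀ u : (𝓞 S.F)ˣ, S.Pos (S.toF ↑u) → ∃ n : ℤ, u = εp ^ n) :
    (∀ x ∈ S.dProd dP d₀, ((εp : 𝓞 S.F) - 1) * x ∈ S.dIdeal) ∧
    (∀ p : ℕ, p.Prime → p ≠ 2 → (p : ℤ) ∣ d₀ → ((εp : 𝓞 S.F) + 1) ∈ dP p) ∧
    ((2 : ℤ) ∣ d₀ → (4 ∣ S.Δ ∧ ¬ (8 ∣ S.Δ)) → ((εp : 𝓞 S.F) + 1) ∈ dP 2) ∧
    ((2 : ℤ) ∣ d₀ → (8 ∣ S.Δ ∧ ¬ (16 ∣ S.Δ)) → ((εp : 𝓞 S.F) + 1) ∈ (dP 2) ^ 3) := by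
  classical
  obtain ⟨hd₀pos, e, habs, hef, hedvd, hecop⟩ := hd₀
  have hd₀dvdΔ : d₀ ∣ S.Δ := habs ▸ (abs_dvd e S.Δ).mpr hedvd
  set pf := d₀.natAbs.primeFactors with hpf
  have hmem_iff : ∀ p : ℕ, p ∈ pf → p.Prime ∧ (p : ℤ) ∣ d₀ := by
    intro p hp
    refine ⟨Nat.prime_of_mem_primeFactors hp, ?_⟩
    have h1 := Nat.dvd_of_mem_primeFactors hp
    have h2 : (p : ℤ) ∣ (d₀.natAbs : ℤ) := Int.natCast_dvd_natCast.mpr h1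
    rwa [Int.natAbs_of_nonneg (le_of_lt hd₀pos)] at h2
  have hmem_of : ∀ p : ℕ, p.Prime → (p : ℤ) ∣ d₀ → p ∈ pf := by
    intro p hp hdvd
    refine Nat.mem_primeFactors.mpr ⟨hp, ?_, by omega⟩
    have : (p : ℤ) ∣ (d₀.natAbs : ℤ) := by
      rwa [Int.natAbs_of_nonneg (le_of_lt hd₀pos)]
    exact_mod_cast this
  have hup : ∀ p ∈ pf, S.uniquePrimeAbove p (dP p) := by
    intro p hp
    obtain ⟨hprime, hdvd⟩ := hmem_iff p hp
    exact hdP p hprime (hdvd.trans hd₀dvdΔ)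
  set b : Ideal (𝓞 S.F) := S.dProd dP d₀ with hbdef
  have hbprod : b = ∏ p ∈ pf, dP p := rfl
  have hmapb : Ideal.map S.σO b = b := by
    rw [hbprod]
    have hgen : ∀ s : Finset ℕ, (∀ p ∈ s, Ideal.map S.σO (dP p) = dP p) →
        Ideal.map S.σO (∏ p ∈ s, dP p) = ∏ p ∈ s, dP p := by
      intro s
      induction s using Finset.induction_on with
      | empty => intro _; simp only [Finset.prod_empty, Ideal.one_eq_top, Ideal.map_top]
      | @insert a s hnotmem ih =>
          intro hall
          rw [Finset.prod_insert hnotmem, Ideal.map_mul,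
            hall _ (Finset.mem_insert_self _ _),
            ih (fun p hp => hall p (Finset.mem_insert_of_mem hp))]
    exact hgen pf (fun p hp => S.map_up p (dP p) (hup p hp))
  have hbfact : ∀ p ∈ pf, ∃ C : Ideal (𝓞 S.F), b = dP p * C ∧ ¬ (dP p ∣ C) := by
    intro p hp
    refine ⟨∏ q ∈ pf.erase p, dP q, ?_, ?_⟩
    · rw [hbprod, ← Finset.mul_prod_erase pf (fun q => dP q) hp]
    · intro hdvd
      rw [Ideal.dvd_iff_le] at hdvd
      obtain ⟨q, hq, hle⟩ := ((hup p hp).1.prod_le).mp hdvd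
      have hqpf : q ∈ pf := Finset.mem_of_mem_erase hq
      have hqne : q ≠ p := Finset.ne_of_mem_erase hq
      have heq : dP q = dP p := by
        have hmax : (dP q).IsMaximal := (hup q hqpf).1.isMaximal (hup q hqpf).2.1
        exact hmax.eq_of_le (hup p hp).2.2.1 hle
      exact S.up_distinct q p (hmem_iff q hqpf).1 (hmem_iff p hp).1 hqne _ _
        (hup q hqpf) (hup p hp) heq
  have hble : ∀ p ∈ pf, b ≤ dP p := by
    intro p hp
    rw [hbprod]
    exact le_trans Ideal.prod_le_inf (Finset.inf_le hp)
  obtain ⟨γ, hγpos, hγspan⟩ := hd₀princ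
  have hσspan : Ideal.span {S.σO γ} = Ideal.span {γ} := by
    have h1 : Ideal.map S.σO (Ideal.span {γ}) = Ideal.span {S.σO γ} := by
      rw [Ideal.map_span, Set.image_singleton]
    rw [← h1, ← hγspan, hmapb, hγspan]
  obtain ⟨u, hu⟩ := (Ideal.span_singleton_eq_span_singleton.mp hσspan).symm
  have hγF : S.toF γ * S.toF ↑u = S.σ (S.toF γ) := by
    rw [← S.toF_mul, hu, S.σO_toF]
  have hupos : S.Pos (S.toF ↑u) := by
    constructor
    · have h1 : S.ι (S.toF γ) * S.ι (S.toF ↑u) = S.ι (S.σ (S.toF γ)) := by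
        rw [← map_mul, hγF]
      by_contra hle
      push_neg at hle
      nlinarith [hγpos.1, hγpos.2]
    · have h2 : S.σ (S.toF γ) * S.σ (S.toF ↑u) = S.toF γ := by
        rw [← map_mul, hγF, S.hσ]
      have h3 : S.ι (S.σ (S.toF γ)) * S.ι (S.σ (S.toF ↑u)) = S.ι (S.toF γ) := by
        rw [← map_mul, h2]
      by_contra hle
      push_neg at hle
      nlinarith [hγpos.1, hγpos.2]
  obtain ⟨nz, hnz⟩ := hεpgen u hupos
  rcases Int.even_or_odd nz with ⟨k, hk⟩ | ⟨k, hk⟩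
  · -- even case : contradiction
    exfalso
    set δ : 𝓞 S.F := ↑(εp ^ k) * γ with hδ
    have hσδ : S.σO δ = δ := by
      rw [hδ, map_mul, S.σO_unit_zpow εp hεppos k, ← hu, hnz, hk]
      calc (↑(εp ^ (-k)) : 𝓞 S.F) * (γ * ↑(εp ^ (k + k)))
          = (↑(εp ^ (-k)) * ↑(εp ^ (k + k)) : 𝓞 S.F) * γ := by ring
        _ = (↑(εp ^ (-k) * εp ^ (k + k)) : 𝓞 S.F) * γ := by rw [Units.val_mul]
        _ = (↑(εp ^ k) : 𝓞 S.F) * γ := by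
            rw [← zpow_add, show -k + (k + k) = k by ring]
    have hδspan : Ideal.span {δ} = Ideal.span {γ} := S.span_unit_mul _ _
    obtain ⟨c, hc⟩ := S.fixed_int δ hσδ
    have hd2 : 2 ≤ d₀.natAbs := by omega
    set p₀ := d₀.natAbs.minFac with hp₀
    have hp₀pf : p₀ ∈ pf :=
      Nat.mem_primeFactors.mpr ⟨Nat.minFac_prime (by omega), Nat.minFac_dvd _, by omega⟩
    have hupp := hup p₀ hp₀pf
    have hδb : δ ∈ b := by
      rw [hγspan]
      exact Ideal.mem_span_singleton'.mpr ⟨↑(εp ^ k), rfl⟩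
    have hcP : ((c : ℤ) : 𝓞 S.F) ∈ dP p₀ := by
      rw [← hc]
      exact hble p₀ hp₀pf hδb
    have hpc : (p₀ : ℤ) ∣ c :=
      S.prime_int_mem p₀ (hmem_iff p₀ hp₀pf).1 (dP p₀) hupp.2.2.1 hupp.2.2.2.1 c hcP
    obtain ⟨c₁, hc₁⟩ := hpc
    have hspan_c : Ideal.span {δ} =
        Ideal.span {((p₀ : ℕ) : 𝓞 S.F)} * Ideal.span {((c₁ : ℤ) : 𝓞 S.F)} := by
      rw [Ideal.span_singleton_mul_span_singleton, hc]
      congr 1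
      rw [hc₁]
      push_cast
      ring
    have hP2span : (dP p₀) ^ 2 ∣ Ideal.span {((p₀ : ℕ) : 𝓞 S.F)} := by
      rw [Ideal.dvd_iff_le, Ideal.span_singleton_le_iff_mem]
      exact S.ram p₀ (hmem_iff p₀ hp₀pf).1 ((hmem_iff p₀ hp₀pf).2.trans hd₀dvdΔ) _ hupp
    have hP2dvd : (dP p₀) ^ 2 ∣ b := by
      rw [hγspan, ← hδspan, hspan_c]
      exact dvd_mul_of_dvd_left hP2span _
    obtain ⟨C, hbC, hnC⟩ := hbfact p₀ hp₀pf
    have hPprime : Prime (dP p₀) := Ideal.prime_of_isPrime hupp.2.1 hupp.1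
    rw [hbC] at hP2dvd
    apply hnC
    have h2 : dP p₀ * dP p₀ ∣ dP p₀ * C := by rw [← pow_two]; exact hP2dvd
    exact (mul_dvd_mul_iff_left hPprime.ne_zero).mp h2
  · -- odd case
    set γ' : 𝓞 S.F := ↑(εp ^ k) * γ with hγ'
    have hσγ' : S.σO γ' = ↑εp * γ' := by
      rw [hγ', map_mul, S.σO_unit_zpow εp hεppos k, ← hu, hnz, hk]
      calc (↑(εp ^ (-k)) : 𝓞 S.F) * (γ * ↑(εp ^ (2 * k + 1)))
          = (↑(εp ^ (-k)) * ↑(εp ^ (2 * k + 1)) : 𝓞 S.F) * γ := by ring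
        _ = (↑(εp ^ (-k) * εp ^ (2 * k + 1)) : 𝓞 S.F) * γ := by rw [Units.val_mul]
        _ = (↑(εp ^ (1 + k)) : 𝓞 S.F) * γ := by
            rw [← zpow_add, show -k + (2 * k + 1) = 1 + k by ring]
        _ = (↑(εp ^ (1 : ℤ) * εp ^ k) : 𝓞 S.F) * γ := by rw [← zpow_add]
        _ = ↑εp * (↑(εp ^ k) * γ) := by rw [Units.val_mul, zpow_one]; ring
    have hspan' : b = Ideal.span {γ'} := by
      rw [hγspan, hγ', S.span_unit_mul]
    obtain ⟨t, ht⟩ := S.trace_int γ'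
    obtain ⟨nn, hnn⟩ := S.norm_int γ'
    obtain ⟨r, hr⟩ := S.diff_sΔ γ'
    have htt : ((↑εp : 𝓞 S.F) + 1) * γ' = ((t : ℤ) : 𝓞 S.F) := by
      rw [← ht, hσγ']; ring
    have hrr : ((1 : 𝓞 S.F) - ↑εp) * γ' = ((r : ℤ) : 𝓞 S.F) * S.sΔ := by
      rw [← hr, hσγ']; ring
    have hident : t ^ 2 = 4 * nn + r ^ 2 * S.Δ := by
      apply S.intCast_inj_O
      show ((t ^ 2 : ℤ) : 𝓞 S.F) = ((4 * nn + r ^ 2 * S.Δ : ℤ) : 𝓞 S.F)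
      push_cast
      linear_combination (-(γ' + S.σO γ' + ((t : ℤ) : 𝓞 S.F))) * ht + 4 * hnn
        + (γ' - S.σO γ' + ((r : ℤ) : 𝓞 S.F) * S.sΔ) * hr + ((r : ℤ) : 𝓞 S.F) ^ 2 * S.sq_sΔ
    have hγ'b : γ' ∈ b := by
      rw [hspan']
      exact Ideal.mem_span_singleton_self _
    have key : ∀ p ∈ pf, ∀ j : ℕ,
        (dP p) ^ (j + 1) ∣ Ideal.span {((t : ℤ) : 𝓞 S.F)} →
        ((↑εp : 𝓞 S.F) + 1) ∈ (dP p) ^ j := by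
      intro p hp j hdvdt
      obtain ⟨C, hbC, hnC⟩ := hbfact p hp
      have hPprime : Prime (dP p) := Ideal.prime_of_isPrime (hup p hp).2.1 (hup p hp).1
      have hsp : Ideal.span {((t : ℤ) : 𝓞 S.F)} =
          Ideal.span {((↑εp : 𝓞 S.F) + 1)} * (dP p * C) := by
        rw [← hbC, hspan', Ideal.span_singleton_mul_span_singleton, htt]
      rw [hsp] at hdvdt
      have h1 : dP p * (dP p) ^ j ∣ dP p * (Ideal.span {((↑εp : 𝓞 S.F) + 1)} * C) := by
        have e1 : dP p * (dP p) ^ j = (dP p) ^ (j + 1) := by rw [pow_succ]; ring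
        have e2 : dP p * (Ideal.span {((↑εp : 𝓞 S.F) + 1)} * C) =
            Ideal.span {((↑εp : 𝓞 S.F) + 1)} * (dP p * C) := by ring
        rw [e1, e2]
        exact hdvdt
      have h2 := (mul_dvd_mul_iff_left hPprime.ne_zero).mp h1
      have h3 := hPprime.pow_dvd_of_dvd_mul_right j hnC h2
      exact (Ideal.span_singleton_le_iff_mem _).mp (Ideal.dvd_iff_le.mp h3)
    refine ⟨?_, ?_, ?_, ?_⟩
    · -- congruence mod 𝔡 𝔡_{d₀}⁻¹
      intro x hx
      rw [hspan'] at hx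
      obtain ⟨d, hd⟩ := Ideal.mem_span_singleton'.mp hx
      show ((↑εp : 𝓞 S.F) - 1) * x ∈ Ideal.span {S.sΔ}
      apply Ideal.mem_span_singleton'.mpr
      refine ⟨-(d * ((r : ℤ) : 𝓞 S.F)), ?_⟩
      rw [← hd]
      linear_combination d * hrr
    · -- odd primes p ∣ d₀
      intro p hp hpne2 hpd₀
      have hppf : p ∈ pf := hmem_of p hp hpd₀
      have hupp := hup p hppf
      have hγ'P : γ' ∈ dP p := hble p hppf hγ'b
      have hnnP : ((nn : ℤ) : 𝓞 S.F) ∈ dP p := by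
        rw [← hnn]
        exact Ideal.mul_mem_right _ _ hγ'P
      have hpnn : (p : ℤ) ∣ nn :=
        S.prime_int_mem p hp (dP p) hupp.2.2.1 hupp.2.2.2.1 nn hnnP
      have hpΔ : (p : ℤ) ∣ S.Δ := hpd₀.trans hd₀dvdΔ
      have hpt2 : (p : ℤ) ∣ t ^ 2 := by
        rw [hident]
        exact dvd_add (Dvd.dvd.mul_left hpnn 4) (Dvd.dvd.mul_left hpΔ (r ^ 2))
      have hpt : (p : ℤ) ∣ t := (Nat.prime_iff_prime_int.mp hp).dvd_of_dvd_pow hpt2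
      obtain ⟨t₁, ht₁⟩ := hpt
      have hspan_t : Ideal.span {((t : ℤ) : 𝓞 S.F)} =
          Ideal.span {((p : ℕ) : 𝓞 S.F)} * Ideal.span {((t₁ : ℤ) : 𝓞 S.F)} := by
        rw [Ideal.span_singleton_mul_span_singleton]
        congr 1
        rw [ht₁]
        push_cast
        ring
      have hP2span : (dP p) ^ 2 ∣ Ideal.span {((p : ℕ) : 𝓞 S.F)} := by
        rw [Ideal.dvd_iff_le, Ideal.span_singleton_le_iff_mem]
        exact S.ram p hp hpΔ _ hupp
      have hdvdt : (dP p) ^ (1 + 1) ∣ Ideal.span {((t : ℤ) : 𝓞 S.F)} := by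
        rw [hspan_t]
        exact dvd_mul_of_dvd_left hP2span _
      have := key p hppf 1 hdvdt
      rwa [pow_one] at this
    · -- p = 2, ord₂ = 2
      intro h2d₀ ⟨h4, h8⟩
      have hppf : (2 : ℕ) ∈ pf := hmem_of 2 Nat.prime_two (by exact_mod_cast h2d₀)
      have hupp := hup 2 hppf
      have h2Δ : ((2 : ℕ) : ℤ) ∣ S.Δ := by
        obtain ⟨m, hm⟩ := h4
        exact ⟨2 * m, by rw [hm]; push_cast; ring⟩
      obtain ⟨m, hm⟩ := h4
      have h2t2 : (2 : ℤ) ∣ t ^ 2 := by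
        refine ⟨2 * nn + 2 * r ^ 2 * m, ?_⟩
        rw [hident, hm]
        ring
      have h2t : (2 : ℤ) ∣ t :=
        (Int.prime_iff_natAbs_prime.mpr (by norm_num)).dvd_of_dvd_pow h2t2
      obtain ⟨t₁, ht₁⟩ := h2t
      have hspan_t : Ideal.span {((t : ℤ) : 𝓞 S.F)} =
          Ideal.span {((2 : ℕ) : 𝓞 S.F)} * Ideal.span {((t₁ : ℤ) : 𝓞 S.F)} := by
        rw [Ideal.span_singleton_mul_span_singleton]
        congr 1
        rw [ht₁]
        push_cast
        ring
      have hP2span : (dP 2) ^ 2 ∣ Ideal.span {((2 : ℕ) : 𝓞 S.F)} := by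
        rw [Ideal.dvd_iff_le, Ideal.span_singleton_le_iff_mem]
        exact S.ram 2 Nat.prime_two h2Δ _ hupp
      have hdvdt : (dP 2) ^ (1 + 1) ∣ Ideal.span {((t : ℤ) : 𝓞 S.F)} := by
        rw [hspan_t]
        exact dvd_mul_of_dvd_left hP2span _
      have := key 2 hppf 1 hdvdt
      rwa [pow_one] at this
    · -- p = 2, ord₂ = 3
      intro h2d₀ ⟨h8, h16⟩
      have hppf : (2 : ℕ) ∈ pf := hmem_of 2 Nat.prime_two (by exact_mod_cast h2d₀)
      have hupp := hup 2 hppf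
      have h2Δ : ((2 : ℕ) : ℤ) ∣ S.Δ := by
        obtain ⟨m, hm⟩ := h8
        exact ⟨4 * m, by rw [hm]; push_cast; ring⟩
      obtain ⟨Δ₁, hΔ₁⟩ := h8
      have hγ'P : γ' ∈ dP 2 := hble 2 hppf hγ'b
      have hnnP : ((nn : ℤ) : 𝓞 S.F) ∈ dP 2 := by
        rw [← hnn]
        exact Ideal.mul_mem_right _ _ hγ'P
      have h2nn : (2 : ℤ) ∣ nn := by
        have := S.prime_int_mem 2 Nat.prime_two (dP 2) hupp.2.2.1 hupp.2.2.2.1 nn hnnP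
        exact_mod_cast this
      obtain ⟨nn₁, hnn₁⟩ := h2nn
      have h2t2 : (2 : ℤ) ∣ t ^ 2 := by
        refine ⟨4 * nn₁ + 4 * r ^ 2 * Δ₁, ?_⟩
        rw [hident, hΔ₁, hnn₁]
        ring
      have hprime2 : Prime (2 : ℤ) := Int.prime_iff_natAbs_prime.mpr (by norm_num)
      have h2t : (2 : ℤ) ∣ t := hprime2.dvd_of_dvd_pow h2t2
      obtain ⟨s, hs⟩ := h2t
      have hs2 : s ^ 2 = 2 * (nn₁ + r ^ 2 * Δ₁) := by
        have h4s : 4 * s ^ 2 = 4 * (2 * (nn₁ + r ^ 2 * Δ₁)) := by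
          have := hident
          rw [hs, hΔ₁, hnn₁] at this
          linear_combination this
        exact mul_left_cancel₀ (by norm_num : (4 : ℤ) ≠ 0) h4s
      have h2s : (2 : ℤ) ∣ s := hprime2.dvd_of_dvd_pow (n := 2) ⟨nn₁ + r ^ 2 * Δ₁, hs2⟩
      obtain ⟨t₂, ht₂⟩ := h2s
      have ht4 : t = 4 * t₂ := by omega
      have hspan_t : Ideal.span {((t : ℤ) : 𝓞 S.F)} =
          (Ideal.span {((2 : ℕ) : 𝓞 S.F)} * Ideal.span {((2 : ℕ) : 𝓞 S.F)})
            * Ideal.span {((t₂ : ℤ) : 𝓞 S.F)} := by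
        rw [Ideal.span_singleton_mul_span_singleton, Ideal.span_singleton_mul_span_singleton]
        congr 1
        rw [ht4]
        push_cast
        ring
      have hP2span : (dP 2) ^ 2 ∣ Ideal.span {((2 : ℕ) : 𝓞 S.F)} := by
        rw [Ideal.dvd_iff_le, Ideal.span_singleton_le_iff_mem]
        exact S.ram 2 Nat.prime_two h2Δ _ hupp
      have hdvdt : (dP 2) ^ (3 + 1) ∣ Ideal.span {((t : ℤ) : 𝓞 S.F)} := by
        rw [hspan_t]
        have h44 : (dP 2) ^ (3 + 1) = (dP 2) ^ 2 * (dP 2) ^ 2 := by ring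
        rw [h44]
        exact dvd_mul_of_dvd_left (mul_dvd_mul hP2span hP2span) _
      exact key 2 hppf 3 hdvdt
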